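/- The hyperbolic space (ℝⁿ, d_h) is absolutely homogeneous: every isometric map v : A → ℝⁿ (with respect to d_h) defined on a non-empty subset A of ℝⁿ extends to a surjective isometry of (ℝⁿ, d_h). -/

import Mathlib

noncomputable def arcosh (t : ℝ) : ℝ := Real.log (t + Real.sqrt (t ^ 2 - 1))

noncomputable def br {n : ℕ} (x : EuclideanSpace ℝ (Fin n)) : ℝ :=
  Real.sqrt (1 + ‖x‖ ^ 2)

noncomputable def dh {n : ℕ} (x y : EuclideanSpace ℝ (Fin n)) : ℝ :=
  arcosh (br x * br y - inner ℝ x y)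

noncomputable def T {n : ℕ} (y x : EuclideanSpace ℝ (Fin n)) : EuclideanSpace ℝ (Fin n) :=
  x + (br x + inner ℝ x y / (br y + 1)) • y

variable {n : ℕ}

lemma one_le_br (x : EuclideanSpace ℝ (Fin n)) : 1 ≤ br x := by
  have := Real.sqrt_le_sqrt (show (1:ℝ) ≤ 1 + ‖x‖ ^ 2 by nlinarith [sq_nonneg ‖x‖])
  simpa [br] using this

lemma br_sq (x : EuclideanSpace ℝ (Fin n)) : br x ^ 2 = 1 + ‖x‖ ^ 2 :=
  Real.sq_sqrt (by positivity)

lemma br_neg (x : EuclideanSpace ℝ (Fin n)) : br (-x) = br x := by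
  simp [br]

lemma br_zero : br (0 : EuclideanSpace ℝ (Fin n)) = 1 := by
  simp [br]

lemma one_le_cosh (x y : EuclideanSpace ℝ (Fin n)) :
    1 ≤ br x * br y - (inner ℝ x y : ℝ) := by
  have h1 := real_inner_le_norm x y
  have h2 := br_sq x
  have h3 := br_sq y
  have h4 : (1:ℝ) ≤ br x := one_le_br x
  have h5 : (1:ℝ) ≤ br y := one_le_br y
  have h6 : (0:ℝ) ≤ ‖x‖ := norm_nonneg _
  have h7 : (0:ℝ) ≤ ‖y‖ := norm_nonneg _
  nlinarith [sq_nonneg (‖x‖ - ‖y‖), sq_nonneg (br x * br y - 1 - ‖x‖ * ‖y‖),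
    sq_nonneg (br x - br y), mul_pos (lt_of_lt_of_le one_pos h4) (lt_of_lt_of_le one_pos h5)]

lemma arcosh_inj {s t : ℝ} (hs : 1 ≤ s) (ht : 1 ≤ t) (h : arcosh s = arcosh t) : s = t := by
  have key : ∀ a b : ℝ, 1 ≤ a → 1 ≤ b → a < b →
      a + Real.sqrt (a ^ 2 - 1) < b + Real.sqrt (b ^ 2 - 1) := by
    intro a b ha hb hab
    have : Real.sqrt (a ^ 2 - 1) ≤ Real.sqrt (b ^ 2 - 1) :=
      Real.sqrt_le_sqrt (by nlinarith)
    linarith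
  have pos : ∀ a : ℝ, 1 ≤ a → 0 < a + Real.sqrt (a ^ 2 - 1) := by
    intro a ha
    have := Real.sqrt_nonneg (a ^ 2 - 1); linarith
  have h' : s + Real.sqrt (s ^ 2 - 1) = t + Real.sqrt (t ^ 2 - 1) := by
    have := congrArg Real.exp h
    rwa [arcosh, arcosh, Real.exp_log (pos s hs), Real.exp_log (pos t ht)] at this
  rcases lt_trichotomy s t with hlt | heq | hgt
  · exact absurd h' (ne_of_lt (key s t hs ht hlt))
  · exact heq
  · exact absurd h'.symm (ne_of_lt (key t s ht hs hgt))

lemma dh_eq_iff {x y x' y' : EuclideanSpace ℝ (Fin n)} (h : dh x y = dh x' y') :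
    br x * br y - (inner ℝ x y : ℝ) = br x' * br y' - (inner ℝ x' y' : ℝ) :=
  arcosh_inj (one_le_cosh x y) (one_le_cosh x' y') h

lemma inner_add_smul (x y x' : EuclideanSpace ℝ (Fin n)) (c c' : ℝ) :
    (inner ℝ (x + c • y) (x' + c' • y) : ℝ) =
      inner ℝ x x' + c' * inner ℝ x y + c * inner ℝ x' y + c * c' * inner ℝ y y := by
  simp only [inner_add_left, inner_add_right, real_inner_smul_left, real_inner_smul_right]
  rw [real_inner_comm y x']
  ring

lemma br_add_one_ne (y : EuclideanSpace ℝ (Fin n)) : br y + 1 ≠ 0 := by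
  have := one_le_br y; linarith

lemma br_T (y x : EuclideanSpace ℝ (Fin n)) :
    br (T y x) = br x * br y + inner ℝ x y := by
  set c := br x + (inner ℝ x y : ℝ) / (br y + 1) with hc
  have htz : T y x = x + c • y := rfl
  have ht1 : br y + 1 ≠ 0 := br_add_one_ne y
  have hs := br_sq x
  have ht := br_sq y
  have hnn : (0:ℝ) ≤ br x * br y + inner ℝ x y := by
    have := one_le_cosh x (-y)
    rw [br_neg, inner_neg_right] at this; linarith
  have hexp : ‖T y x‖ ^ 2 = ‖x‖ ^ 2 + 2 * c * inner ℝ x y + c ^ 2 * ‖y‖ ^ 2 := by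
    rw [← real_inner_self_eq_norm_sq, htz, inner_add_smul,
      real_inner_self_eq_norm_sq, real_inner_self_eq_norm_sq]
    ring
  have key : 1 + ‖T y x‖ ^ 2 = (br x * br y + inner ℝ x y) ^ 2 := by
    rw [hexp, show ‖x‖ ^ 2 = br x ^ 2 - 1 by linarith,
      show ‖y‖ ^ 2 = br y ^ 2 - 1 by linarith, hc]
    field_simp
    ring
  rw [br, key, Real.sqrt_sq hnn]

lemma inner_yy (y : EuclideanSpace ℝ (Fin n)) : (inner ℝ y y : ℝ) = br y ^ 2 - 1 := by
  rw [real_inner_self_eq_norm_sq]; have := br_sq y; linarith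

lemma cosh_T (y x x' : EuclideanSpace ℝ (Fin n)) :
    br (T y x) * br (T y x') - (inner ℝ (T y x) (T y x') : ℝ) =
      br x * br x' - inner ℝ x x' := by
  set c := br x + (inner ℝ x y : ℝ) / (br y + 1) with hcd
  set c' := br x' + (inner ℝ x' y : ℝ) / (br y + 1) with hcd'
  have htz : T y x = x + c • y := rfl
  have htz' : T y x' = x' + c' • y := rfl
  have ht1 : br y + 1 ≠ 0 := br_add_one_ne y
  rw [br_T, br_T]
  rw [show (inner ℝ (T y x) (T y x') : ℝ) =
      inner ℝ x x' + c' * inner ℝ x y + c * inner ℝ x' y + c * c' * inner ℝ y y by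
    rw [htz, htz']; exact inner_add_smul x y x' c c']
  rw [inner_yy, hcd, hcd']
  field_simp
  ring

lemma dh_T (y x x' : EuclideanSpace ℝ (Fin n)) : dh (T y x) (T y x') = dh x x' := by
  rw [dh, dh, cosh_T]

lemma T_neg_T (y x : EuclideanSpace ℝ (Fin n)) : T (-y) (T y x) = x := by
  set c := br x + (inner ℝ x y : ℝ) / (br y + 1) with hcd
  have htz : T y x = x + c • y := rfl
  have ht1 : br y + 1 ≠ 0 := br_add_one_ne y
  have hiz : (inner ℝ (T y x) y : ℝ) = inner ℝ x y + c * (br y ^ 2 - 1) := by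
    rw [htz, inner_add_left, real_inner_smul_left, inner_yy]
  show T y x + (br (T y x) + (inner ℝ (T y x) (-y) : ℝ) / (br (-y) + 1)) • (-y) = x
  rw [inner_neg_right, br_neg, br_T, hiz]
  have hco : br x * br y + (inner ℝ x y : ℝ) +
      -((inner ℝ x y : ℝ) + c * (br y ^ 2 - 1)) / (br y + 1) = c := by
    rw [hcd]; field_simp; ring
  rw [hco, htz, smul_neg]
  abel

lemma T_T_neg (y x : EuclideanSpace ℝ (Fin n)) : T y (T (-y) x) = x := by
  have := T_neg_T (-y) x
  rwa [neg_neg] at this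

lemma T_bijective (y : EuclideanSpace ℝ (Fin n)) : Function.Bijective (T y) :=
  Function.bijective_iff_has_inverse.mpr ⟨T (-y), fun x => T_neg_T y x, fun x => T_T_neg y x⟩

lemma T_zero (y : EuclideanSpace ℝ (Fin n)) : T y 0 = y := by
  simp [T, br_zero]

lemma T_neg_self (a : EuclideanSpace ℝ (Fin n)) : T (-a) a = 0 := by
  rw [T, inner_neg_right, br_neg]
  have h1 : br a + 1 ≠ 0 := br_add_one_ne a
  have hco : br a + -(inner ℝ a a : ℝ) / (br a + 1) = 1 := by
    rw [inner_yy]; field_simp; ring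
  rw [hco, one_smul]
  simp

open Submodule in
lemma extend_inner (A : Set (EuclideanSpace ℝ (Fin n)))
    (u : EuclideanSpace ℝ (Fin n) → EuclideanSpace ℝ (Fin n))
    (hu : ∀ x ∈ A, ∀ y ∈ A, (inner ℝ (u x) (u y) : ℝ) = inner ℝ x y) :
    ∃ g : EuclideanSpace ℝ (Fin n) →ₗᵢ[ℝ] EuclideanSpace ℝ (Fin n), ∀ a ∈ A, g a = u a := by
  classical
  obtain ⟨b, hbA, hspan, hli⟩ := exists_linearIndependent ℝ A
  let B := Module.Basis.extend hli
  let L : EuclideanSpace ℝ (Fin n) →ₗ[ℝ] EuclideanSpace ℝ (Fin n) :=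
    B.constr ℝ (fun i => u (i : EuclideanSpace ℝ (Fin n)))
  have hLb : ∀ x ∈ b, L x = u x := by
    intro x hx
    have hli' : LinearIndepOn ℝ id b := hli
    have hx' : x ∈ hli'.extend (Set.subset_univ b) := hli'.subset_extend _ hx
    have h1 := B.constr_basis ℝ (fun i => u (i : EuclideanSpace ℝ (Fin n))) ⟨x, hx'⟩
    rwa [show B ⟨x, hx'⟩ = x from Module.Basis.extend_apply_self _ _] at h1
  have hinner : ∀ x ∈ span ℝ b, ∀ y ∈ span ℝ b, (inner ℝ (L x) (L y) : ℝ) = inner ℝ x y := by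
    intro x hx y hy
    induction hx, hy using span_induction₂ with
    | mem_mem x y hx hy =>
      rw [hLb x hx, hLb y hy]; exact hu x (hbA hx) y (hbA hy)
    | zero_left y hy => simp
    | zero_right x hx => simp
    | add_left x y z hx hy hz h1 h2 => simp only [map_add, inner_add_left, h1, h2]
    | add_right x y z hx hy hz h1 h2 => simp only [map_add, inner_add_right, h1, h2]
    | smul_left r x y hx hy h1 => simp only [map_smul, real_inner_smul_left, h1]
    | smul_right r x y hx hy h1 => simp only [map_smul, real_inner_smul_right, h1]
  have hagree : ∀ x ∈ A, L x = u x := by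
    intro x hx
    have hxs : x ∈ span ℝ b := by
      rw [hspan]; exact subset_span hx
    have hmix : ∀ z ∈ span ℝ b, (inner ℝ (L z) (u x) : ℝ) = inner ℝ z x := by
      intro z hz
      induction hz using span_induction with
      | mem z hz => rw [hLb z hz]; exact hu z (hbA hz) x hx
      | zero => simp
      | add z w hz hw h1 h2 => simp only [map_add, inner_add_left, h1, h2]
      | smul r z hz h1 => simp only [map_smul, real_inner_smul_left, h1]
    have hz : (inner ℝ (L x - u x) (L x - u x) : ℝ) = 0 := by
      simp only [inner_sub_left, inner_sub_right]
      have h1 := hinner x hxs x hxs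
      have h2 := hmix x hxs
      have h3 := hu x hx x hx
      have h4 : (inner ℝ (u x) (L x) : ℝ) = inner ℝ (L x) (u x) := real_inner_comm _ _
      linarith
    have := inner_self_eq_zero.mp hz
    exact sub_eq_zero.mp this
  have hnorm : ∀ s : span ℝ A, ‖L s‖ = ‖(s : EuclideanSpace ℝ (Fin n))‖ := by
    intro s
    have hs : (s : EuclideanSpace ℝ (Fin n)) ∈ span ℝ b := by
      rw [hspan]; exact s.2
    have h1 := hinner s hs s hs
    rw [real_inner_self_eq_norm_sq, real_inner_self_eq_norm_sq] at h1
    exact (sq_eq_sq₀ (norm_nonneg _) (norm_nonneg _)).mp h1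
  let Lr : span ℝ A →ₗᵢ[ℝ] EuclideanSpace ℝ (Fin n) :=
    { toLinearMap := L.domRestrict (span ℝ A), norm_map' := hnorm }
  refine ⟨Lr.extend, fun a ha => ?_⟩
  have haS : a ∈ span ℝ A := subset_span ha
  have h1 := Lr.extend_apply ⟨a, haS⟩
  have h2 : Lr ⟨a, haS⟩ = L a := rfl
  rw [h1, h2, hagree a ha]

lemma dh_linIso (g : EuclideanSpace ℝ (Fin n) →ₗᵢ[ℝ] EuclideanSpace ℝ (Fin n))
    (x y : EuclideanSpace ℝ (Fin n)) : dh (g x) (g y) = dh x y := by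
  rw [dh, dh, show br (g x) = br x by rw [br, br, g.norm_map],
    show br (g y) = br y by rw [br, br, g.norm_map], g.inner_map_map]

lemma dh_zero_right (x : EuclideanSpace ℝ (Fin n)) : dh x 0 = arcosh (br x) := by
  simp [dh, br_zero]

theorem dh_absolutely_homogeneous {n : ℕ} (A : Set (EuclideanSpace ℝ (Fin n)))
    (hA : A.Nonempty) (v : EuclideanSpace ℝ (Fin n) → EuclideanSpace ℝ (Fin n))
    (hv : ∀ x ∈ A, ∀ y ∈ A, dh (v x) (v y) = dh x y) :
    ∃ f : EuclideanSpace ℝ (Fin n) → EuclideanSpace ℝ (Fin n),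
      Function.Bijective f ∧ (∀ x y, dh (f x) (f y) = dh x y) ∧ ∀ a ∈ A, f a = v a := by
  obtain ⟨a, ha⟩ := hA
  set b := v a with hb
  set u : EuclideanSpace ℝ (Fin n) → EuclideanSpace ℝ (Fin n) :=
    fun z => T (-b) (v (T a z)) with hu
  set A0 : Set (EuclideanSpace ℝ (Fin n)) := T (-a) '' A with hA0
  have hTa : ∀ z ∈ A0, T a z ∈ A := by
    rintro z ⟨x, hx, rfl⟩
    rw [T_T_neg]; exact hx
  have hdh0 : ∀ z ∈ A0, ∀ w ∈ A0, dh (u z) (u w) = dh z w := by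
    intro z hz w hw
    calc dh (u z) (u w) = dh (v (T a z)) (v (T a w)) := dh_T (-b) _ _
      _ = dh (T a z) (T a w) := hv _ (hTa z hz) _ (hTa w hw)
      _ = dh z w := dh_T a z w
  have h0A0 : (0 : EuclideanSpace ℝ (Fin n)) ∈ A0 := ⟨a, ha, T_neg_self a⟩
  have hu0 : u 0 = 0 := by
    show T (-b) (v (T a 0)) = 0
    rw [T_zero, ← hb]
    exact T_neg_self b
  have hbr : ∀ z ∈ A0, br (u z) = br z := by
    intro z hz
    have h1 := hdh0 z hz 0 h0A0
    rw [hu0, dh_zero_right, dh_zero_right] at h1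
    exact arcosh_inj (one_le_br _) (one_le_br _) h1
  have hInner : ∀ z ∈ A0, ∀ w ∈ A0, (inner ℝ (u z) (u w) : ℝ) = inner ℝ z w := by
    intro z hz w hw
    have h := dh_eq_iff (hdh0 z hz w hw)
    rw [hbr z hz, hbr w hw] at h
    linarith
  obtain ⟨g, hg⟩ := extend_inner A0 u hInner
  refine ⟨fun x => T b (g (T (-a) x)), ?_, ?_, ?_⟩
  · have hgbij : Function.Bijective g := by
      refine ⟨g.injective, ?_⟩
      exact LinearMap.injective_iff_surjective.mp g.injective
    exact (T_bijective b).comp (hgbij.comp (T_bijective (-a)))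
  · intro x y
    rw [dh_T, dh_linIso, dh_T]
  · intro x hx
    have hmem : T (-a) x ∈ A0 := ⟨x, hx, rfl⟩
    show T b (g (T (-a) x)) = v x
    rw [hg _ hmem]
    show T b (T (-b) (v (T a (T (-a) x)))) = v x
    rw [T_T_neg, T_T_neg]
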